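/- For complex numbers q and L with 0 < |q| < 1 and L ≠ 0, the Weierstrass sigma product satisfies the functional equation σ(qL, q) = −L^{-1} · σ(L, q). -/

import Mathlib

/-- The Weierstrass sigma product
`σ(L,q) = (1 − L) · ∏_{k≥1} (1 − q^k L)(1 − q^k L⁻¹)/(1 − q^k)²`. -/
noncomputable def weierstrassSigma (L q : ℂ) : ℂ :=
  (1 - L) * ∏' k : ℕ,
    ((1 - q ^ (k + 1) * L) * (1 - q ^ (k + 1) * L⁻¹)) / (1 - q ^ (k + 1)) ^ 2

open Complex Filter

lemma my_multipliable_one_add (f : ℕ → ℂ) (hf : Summable f) :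
    Multipliable (fun k : ℕ => 1 + f k) := by
  obtain ⟨N, hN⟩ : ∃ N : ℕ, ∀ k, N ≤ k → ‖f k‖ ≤ 1/2 := by
    have h2 := (Metric.tendsto_atTop.mp hf.tendsto_atTop_zero) (1/2) (by norm_num)
    obtain ⟨N, hN⟩ := h2
    exact ⟨N, fun k hk => by simpa [dist_zero_right] using (hN k hk).le⟩
  apply Multipliable.comp_nat_add (k := N)
  have hb : ∀ k : ℕ, ‖f (k + N)‖ ≤ 1/2 := fun k => hN (k + N) (Nat.le_add_left N k)
  have hne : ∀ k : ℕ, (1 : ℂ) + f (k + N) ≠ 0 := by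
    intro k h0
    have h1 : f (k + N) = -1 := by linear_combination h0
    have := hb k
    rw [h1] at this
    norm_num at this
  have hlog : Summable (fun k : ℕ => Complex.log (1 + f (k + N))) := by
    apply Summable.of_norm_bounded (g := fun k => (3/2 : ℝ) * ‖f (k + N)‖)
    · exact ((summable_nat_add_iff N).mpr hf.norm).mul_left _
    · intro k
      exact Complex.norm_log_one_add_half_le_self (hb k)
  exact Complex.multipliable_of_summable_log hlog

lemma my_mult_geom (q c : ℂ) (hq : ‖q‖ < 1) :
    Multipliable (fun k : ℕ => 1 - q ^ k * c) := by
  have hs : Summable (fun k : ℕ => -(q ^ k * c)) :=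
    ((summable_geometric_of_norm_lt_one hq).mul_right c).neg
  have := my_multipliable_one_add _ hs
  exact this.congr (fun k => by ring)

lemma my_mult_inv_sq (q : ℂ) (hq : ‖q‖ < 1) :
    Multipliable (fun k : ℕ => (((1 : ℂ) - q ^ (k + 1)) ^ 2)⁻¹) := by
  have hqk : ∀ k : ℕ, (1 : ℂ) - q ^ (k + 1) ≠ 0 := by
    intro k h0
    have h1 : ‖q ^ (k + 1)‖ < 1 := by
      calc ‖q ^ (k+1)‖ = ‖q‖ ^ (k+1) := norm_pow q (k+1)
        _ ≤ ‖q‖ ^ 1 := pow_le_pow_of_le_one (norm_nonneg q) hq.le (by omega)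
        _ < 1 := by simpa using hq
    have h2 : q ^ (k + 1) = 1 := by linear_combination -h0
    rw [h2] at h1; norm_num at h1
  -- r k = (1 - q^(k+1))⁻¹ is multipliable
  have hr : Multipliable (fun k : ℕ => ((1 : ℂ) - q ^ (k + 1))⁻¹) := by
    have hsum : Summable (fun k : ℕ => q ^ (k + 1) / (1 - q ^ (k + 1))) := by
      apply Summable.of_norm_bounded (g := fun k => ‖q‖ ^ (k + 1) * (1 - ‖q‖)⁻¹)
      · exact (summable_nat_add_iff 1).mpr
          ((summable_geometric_of_lt_one (norm_nonneg q) hq).mul_right _)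
      · intro k
        rw [norm_div, norm_pow]
        have hden : 1 - ‖q‖ ≤ ‖1 - q ^ (k + 1)‖ := by
          have h1 : ‖q ^ (k+1)‖ ≤ ‖q‖ := by
            rw [norm_pow]
            calc ‖q‖ ^ (k+1) ≤ ‖q‖ ^ 1 :=
                pow_le_pow_of_le_one (norm_nonneg q) hq.le (by omega)
              _ = ‖q‖ := pow_one _
          calc 1 - ‖q‖ ≤ 1 - ‖q ^ (k+1)‖ := by linarith
            _ = ‖(1:ℂ)‖ - ‖q ^ (k+1)‖ := by simp
            _ ≤ ‖1 - q ^ (k+1)‖ := norm_sub_norm_le _ _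
        have hpos : (0:ℝ) < 1 - ‖q‖ := by linarith
        rw [← div_eq_mul_inv]
        exact div_le_div₀ (by positivity) le_rfl hpos hden
    have := my_multipliable_one_add _ hsum
    apply this.congr
    intro k
    have h := hqk k
    field_simp
    ring
  have := hr.mul hr
  apply this.congr
  intro k
  rw [← mul_inv, ← sq]

theorem stmt11 (q L : ℂ) (hq0 : 0 < ‖q‖) (hq1 : ‖q‖ < 1)
    (hL : L ≠ 0) :
    weierstrassSigma (q * L) q = -L⁻¹ * weierstrassSigma L q := by
  have hq : q ≠ 0 := by
    intro h; rw [h] at hq0; simp at hq0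
  have hnq : ‖q‖ < 1 := hq1
  -- multipliability of the four basic sequences and t
  have hu : Multipliable (fun k : ℕ => 1 - q ^ (k + 1) * L) :=
    (my_mult_geom q (q * L) hnq).congr (fun k => by ring)
  have hv : Multipliable (fun k : ℕ => 1 - q ^ (k + 1) * L⁻¹) :=
    (my_mult_geom q (q * L⁻¹) hnq).congr (fun k => by ring)
  have hu' : Multipliable (fun k : ℕ => 1 - q ^ (k + 1) * (q * L)) :=
    (my_mult_geom q (q * (q * L)) hnq).congr (fun k => by ring)
  have hv' : Multipliable (fun k : ℕ => 1 - q ^ k * L⁻¹) := my_mult_geom q L⁻¹ hnq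
  have ht : Multipliable (fun k : ℕ => (((1:ℂ) - q ^ (k + 1)) ^ 2)⁻¹) :=
    my_mult_inv_sq q hnq
  set U' : ℂ := ∏' k : ℕ, (1 - q ^ (k + 1) * (q * L)) with hU'
  set V : ℂ := ∏' k : ℕ, (1 - q ^ (k + 1) * L⁻¹) with hV
  set T : ℂ := ∏' k : ℕ, (((1:ℂ) - q ^ (k + 1)) ^ 2)⁻¹ with hT
  -- shift identity for u
  have hshift_u : (∏' k : ℕ, (1 - q ^ (k + 1) * L)) = (1 - q * L) * U' := by
    rw [tprod_eq_zero_mul' (f := fun k : ℕ => 1 - q ^ (k + 1) * L)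
      ((hu'.congr (fun k => by ring)))]
    congr 1
    · ring
    · exact tprod_congr (fun k => by ring)
  -- shift identity for v'
  have hshift_v : (∏' k : ℕ, (1 - q ^ k * L⁻¹)) = (1 - L⁻¹) * V := by
    rw [tprod_eq_zero_mul' (f := fun k : ℕ => 1 - q ^ k * L⁻¹) hv]
    congr 1
    · ring
  -- decomposition of σ(L, q) product
  have hA : (∏' k : ℕ, ((1 - q ^ (k + 1) * L) * (1 - q ^ (k + 1) * L⁻¹)
      / (1 - q ^ (k + 1)) ^ 2)) = ((1 - q * L) * U') * V * T := by
    calc (∏' k : ℕ, ((1 - q ^ (k + 1) * L) * (1 - q ^ (k + 1) * L⁻¹)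
          / (1 - q ^ (k + 1)) ^ 2))
        = ∏' k : ℕ, ((1 - q ^ (k + 1) * L) * (1 - q ^ (k + 1) * L⁻¹)
          * (((1:ℂ) - q ^ (k + 1)) ^ 2)⁻¹) :=
          tprod_congr (fun k => div_eq_mul_inv _ _)
      _ = (∏' k : ℕ, ((1 - q ^ (k + 1) * L) * (1 - q ^ (k + 1) * L⁻¹))) * T :=
          Multipliable.tprod_mul (hu.mul hv) ht
      _ = ((∏' k : ℕ, (1 - q ^ (k + 1) * L)) * V) * T := by
          rw [Multipliable.tprod_mul hu hv]
      _ = ((1 - q * L) * U') * V * T := by rw [hshift_u]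
  -- decomposition of σ(qL, q) product
  have hqinv : ∀ k : ℕ, q ^ (k + 1) * (q * L)⁻¹ = q ^ k * L⁻¹ := by
    intro k
    rw [mul_inv, pow_succ]
    field_simp
  have hA' : (∏' k : ℕ, ((1 - q ^ (k + 1) * (q * L)) * (1 - q ^ (k + 1) * (q * L)⁻¹)
      / (1 - q ^ (k + 1)) ^ 2)) = U' * ((1 - L⁻¹) * V) * T := by
    calc (∏' k : ℕ, ((1 - q ^ (k + 1) * (q * L)) * (1 - q ^ (k + 1) * (q * L)⁻¹)
          / (1 - q ^ (k + 1)) ^ 2))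
        = ∏' k : ℕ, ((1 - q ^ (k + 1) * (q * L)) * (1 - q ^ k * L⁻¹)
          * (((1:ℂ) - q ^ (k + 1)) ^ 2)⁻¹) :=
          tprod_congr (fun k => by rw [hqinv k, div_eq_mul_inv])
      _ = (∏' k : ℕ, ((1 - q ^ (k + 1) * (q * L)) * (1 - q ^ k * L⁻¹))) * T :=
          Multipliable.tprod_mul (hu'.mul hv') ht
      _ = (U' * (∏' k : ℕ, (1 - q ^ k * L⁻¹))) * T := by
          rw [Multipliable.tprod_mul hu' hv']
      _ = U' * ((1 - L⁻¹) * V) * T := by rw [hshift_v]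
  have key : L * L⁻¹ = 1 := mul_inv_cancel₀ hL
  rw [weierstrassSigma, weierstrassSigma, hA, hA']
  linear_combination (-1 : ℂ) * (1 - q * L) * U' * V * T * key
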